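/- (Entropy lower bound for the a priori covariance) Under the stated assumptions, the positive definite Riccati solution Σ satisfies ln det(Σ) ≥ ln( (det A)² / ( (1/n)·( tr(W⁻¹) + ∑_{i=1}^{n} c_i²/σ_i² )ⁿ ) + det(W) ). -/

import Mathlib

open Matrix

section RiccatiAux
open Finset

-- trace = sum of eigenvalues, real case
lemma trace_eq_sum_eigs {m : Type*} [Fintype m] [DecidableEq m]
    {N : Matrix m m ℝ} (hN : N.IsHermitian) :
    N.trace = ∑ i, hN.eigenvalues i := by
  conv_lhs => rw [hN.spectral_theorem]
  rw [Unitary.conjStarAlgAut_apply, Matrix.trace_mul_cycle]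
  rw [(Matrix.mem_unitaryGroup_iff'.mp (hN.eigenvectorUnitary).2), one_mul,
    Matrix.trace_diagonal]
  simp

lemma det_eq_prod_eigs {m : Type*} [Fintype m] [DecidableEq m]
    {N : Matrix m m ℝ} (hN : N.IsHermitian) :
    N.det = ∏ i, hN.eigenvalues i := by
  simpa using hN.det_eq_prod_eigenvalues

lemma prod_one_add_le {ι : Type*} {s : Finset ι} (hs : s.Nonempty) {f : ι → ℝ}
    (hf : ∀ i, 0 ≤ f i) : 1 + ∏ i ∈ s, f i ≤ ∏ i ∈ s, (1 + f i) := by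
  induction hs using Finset.Nonempty.cons_induction with
  | singleton a => simp
  | cons a s ha hs ih =>
    rw [Finset.prod_cons, Finset.prod_cons]
    have h1 : 0 ≤ ∏ i ∈ s, f i := Finset.prod_nonneg fun i _ => hf i
    have h2 : (1 + f a) * (1 + ∏ i ∈ s, f i) ≤ (1 + f a) * ∏ i ∈ s, (1 + f i) := by
      apply mul_le_mul_of_nonneg_left ih (by nlinarith [hf a])
    refine le_trans ?_ h2
    nlinarith [hf a]

lemma det_one_add {m : Type*} [Fintype m] [DecidableEq m] [Nonempty m]
    {Z : Matrix m m ℝ} (hZ : Z.PosSemidef) : 1 + Z.det ≤ (1 + Z).det := by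
  have hH := hZ.1
  have hspec := hH.spectral_theorem
  set U : Matrix m m ℝ := (hH.eigenvectorUnitary : Matrix m m ℝ) with hU
  have hUU : U * star U = 1 := Matrix.mem_unitaryGroup_iff.mp hH.eigenvectorUnitary.2
  have h1 : (1 : Matrix m m ℝ) + Z = U * (1 + diagonal (RCLike.ofReal ∘ hH.eigenvalues)) * star U := by
    rw [Matrix.mul_add, Matrix.add_mul, Matrix.mul_one, hUU, hU, ← Unitary.conjStarAlgAut_apply (S := ℝ), ← hspec]
  have hdet : (1 + Z).det = ∏ i, (1 + hH.eigenvalues i) := by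
    rw [h1, Matrix.det_mul, Matrix.det_mul, mul_comm (U.det), mul_assoc, ← Matrix.det_mul, 
      hUU, Matrix.det_one, mul_one]
    rw [show (1 : Matrix m m ℝ) + diagonal (RCLike.ofReal ∘ hH.eigenvalues)
        = diagonal (fun i => 1 + hH.eigenvalues i) by
      rw [← Matrix.diagonal_one, Matrix.diagonal_add]; rfl]
    rw [Matrix.det_diagonal]
  rw [hdet, det_eq_prod_eigs hH]
  exact prod_one_add_le Finset.univ_nonempty hZ.eigenvalues_nonneg

open scoped MatrixOrder in
lemma det_superadd {m : Type*} [Fintype m] [DecidableEq m] [Nonempty m]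
    {X Y : Matrix m m ℝ} (hX : X.PosSemidef) (hY : Y.PosDef) :
    X.det + Y.det ≤ (X + Y).det := by
  have hYs := hY.posSemidef
  set R : Matrix m m ℝ := CFC.sqrt Y with hRdef
  have hRps : R.PosSemidef := Matrix.nonneg_iff_posSemidef.mp (CFC.sqrt_nonneg Y)
  have hRR : R * R = Y := CFC.sqrt_mul_sqrt_self Y (Matrix.nonneg_iff_posSemidef.mpr hYs)
  have hdetY : 0 < Y.det := hY.det_pos
  have hdetR : R.det ≠ 0 := by
    intro h
    rw [← hRR, Matrix.det_mul, h, mul_zero] at hdetY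
    exact lt_irrefl _ hdetY
  have hRinv : R * R⁻¹ = 1 := Matrix.mul_nonsing_inv _ (isUnit_iff_ne_zero.mpr hdetR)
  have hRinv' : R⁻¹ * R = 1 := Matrix.nonsing_inv_mul _ (isUnit_iff_ne_zero.mpr hdetR)
  have hRsymm : Rᵀ = R := by
    have := hRps.1
    rwa [Matrix.IsHermitian, conjTranspose_eq_transpose_of_trivial] at this
  have hRisymm : (R⁻¹)ᵀ = R⁻¹ := by rw [Matrix.transpose_nonsing_inv, hRsymm]
  set Z : Matrix m m ℝ := R⁻¹ * X * R⁻¹ with hZdef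
  have hZps : Z.PosSemidef := by
    have := hX.conjTranspose_mul_mul_same (R⁻¹)
    rwa [conjTranspose_eq_transpose_of_trivial, hRisymm] at this
  have hfact : X + Y = R * (Z + 1) * R := by
    rw [Matrix.mul_add, Matrix.add_mul, Matrix.mul_one, hRR, hZdef]
    congr 1
    rw [← Matrix.mul_assoc, ← Matrix.mul_assoc, hRinv, Matrix.one_mul, Matrix.mul_assoc, hRinv',
      Matrix.mul_one]
  have hdetZ : Y.det * Z.det = X.det := by
    rw [hZdef, Matrix.det_mul, Matrix.det_mul, Matrix.det_nonsing_inv, ← hRR, Matrix.det_mul]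
    field_simp [Ring.inverse_eq_inv']
    rw [Ring.inverse_eq_inv', ← mul_pow, mul_inv_cancel₀ hdetR, one_pow, one_mul]
  have h1 : 1 + Z.det ≤ (1 + Z).det := det_one_add hZps
  calc X.det + Y.det = Y.det * (1 + Z.det) := by rw [mul_add, mul_one, hdetZ]; ring
    _ ≤ Y.det * (1 + Z).det := by nlinarith
    _ = (X + Y).det := by
        rw [hfact, Matrix.det_mul, Matrix.det_mul, ← hRR, Matrix.det_mul, add_comm Z 1]; ring

lemma det_le_trace_div_pow {m : Type*} [Fintype m] [DecidableEq m] [Nonempty m]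
    {N : Matrix m m ℝ} (hN : N.PosSemidef) :
    N.det ≤ (N.trace / (Fintype.card m : ℝ)) ^ (Fintype.card m) := by
  set k : ℕ := Fintype.card m with hk
  have hk0 : 0 < k := Fintype.card_pos
  have hkR : (0:ℝ) < k := by exact_mod_cast hk0
  have hμ : ∀ i, 0 ≤ hN.1.eigenvalues i := hN.eigenvalues_nonneg
  have hgm := Real.geom_mean_le_arith_mean_weighted Finset.univ (fun _ => 1 / (k:ℝ))
    (fun i => hN.1.eigenvalues i) (fun i _ => by positivity)
    (by simp [Finset.card_univ, ← hk, hkR.ne']) (fun i _ => hμ i)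
  have hsum : ∑ i, (1 / (k:ℝ)) * hN.1.eigenvalues i = N.trace / k := by
    rw [trace_eq_sum_eigs hN.1, Finset.sum_div]
    exact Finset.sum_congr rfl fun i _ => by ring
  have hprod : (∏ i, hN.1.eigenvalues i ^ (1 / (k:ℝ))) ^ k = N.det := by
    rw [det_eq_prod_eigs hN.1, ← Finset.prod_pow]
    congr 1; funext i
    rw [← Real.rpow_natCast (hN.1.eigenvalues i ^ (1 / (k:ℝ))) k, ← Real.rpow_mul (hμ i)]
    field_simp
    simp
  calc N.det = (∏ i, hN.1.eigenvalues i ^ (1 / (k:ℝ))) ^ k := hprod.symm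
    _ ≤ (N.trace / k) ^ k := by
        apply pow_le_pow_left₀ (Finset.prod_nonneg fun i _ => Real.rpow_nonneg (hμ i) _)
        rw [← hsum]; exact hgm

lemma trace_nonneg_of_psd {m : Type*} [Fintype m] [DecidableEq m]
    {N : Matrix m m ℝ} (hN : N.PosSemidef) : 0 ≤ N.trace := by
  rw [Matrix.trace]
  apply Finset.sum_nonneg
  intro i _
  have := hN.dotProduct_mulVec_nonneg (Pi.single i 1)
  simpa [dotProduct, Matrix.mulVec, Pi.single_apply, Finset.sum_ite_eq] using this

lemma symm_dot {m : Type*} [Fintype m] {M : Matrix m m ℝ} (hM : Mᵀ = M)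
    (u v : m → ℝ) : u ⬝ᵥ M *ᵥ v = M *ᵥ u ⬝ᵥ v := by
  rw [Matrix.dotProduct_mulVec, ← Matrix.vecMul_transpose, hM]

lemma quad_inv_antitone {m : Type*} [Fintype m] [DecidableEq m]
    {W S : Matrix m m ℝ} (hW : W.PosDef) (hS : S.PosDef) (hsub : (S - W).PosSemidef)
    (x : m → ℝ) : x ⬝ᵥ S⁻¹ *ᵥ x ≤ x ⬝ᵥ W⁻¹ *ᵥ x := by
  have hWsymm : Wᵀ = W := by
    have := hW.1; rwa [Matrix.IsHermitian, conjTranspose_eq_transpose_of_trivial] at this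
  have hSsymm : Sᵀ = S := by
    have := hS.1; rwa [Matrix.IsHermitian, conjTranspose_eq_transpose_of_trivial] at this
  have hWu : IsUnit W.det := isUnit_iff_ne_zero.mpr hW.det_pos.ne'
  have hSu : IsUnit S.det := isUnit_iff_ne_zero.mpr hS.det_pos.ne'
  set y : m → ℝ := S⁻¹ *ᵥ x with hy
  set w : m → ℝ := W⁻¹ *ᵥ x with hw
  have hSy : S *ᵥ y = x := by
    rw [hy, Matrix.mulVec_mulVec, Matrix.mul_nonsing_inv _ hSu, Matrix.one_mulVec]
  have hWw : W *ᵥ w = x := by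
    rw [hw, Matrix.mulVec_mulVec, Matrix.mul_nonsing_inv _ hWu, Matrix.one_mulVec]
  have h1 : 0 ≤ (w - y) ⬝ᵥ W *ᵥ (w - y) := by
    have := hW.posSemidef.dotProduct_mulVec_nonneg (w - y); simpa using this
  have h2 : 0 ≤ y ⬝ᵥ (S - W) *ᵥ y := by
    have := hsub.dotProduct_mulVec_nonneg y; simpa using this
  have key : x ⬝ᵥ W⁻¹ *ᵥ x - x ⬝ᵥ S⁻¹ *ᵥ x = (w - y) ⬝ᵥ W *ᵥ (w - y) + y ⬝ᵥ (S - W) *ᵥ y := by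
    have e1 : w ⬝ᵥ W *ᵥ w = x ⬝ᵥ w := by rw [symm_dot hWsymm, hWw]
    have e2 : w ⬝ᵥ W *ᵥ y = x ⬝ᵥ y := by rw [symm_dot hWsymm, hWw]
    have e3 : y ⬝ᵥ W *ᵥ w = y ⬝ᵥ x := by rw [hWw]
    have e4 : y ⬝ᵥ S *ᵥ y = y ⬝ᵥ x := by rw [hSy]
    have e5 : x ⬝ᵥ S⁻¹ *ᵥ x = x ⬝ᵥ y := rfl
    have e6 : x ⬝ᵥ W⁻¹ *ᵥ x = x ⬝ᵥ w := rfl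
    have e7 : y ⬝ᵥ x = x ⬝ᵥ y := dotProduct_comm y x
    have expand : (w - y) ⬝ᵥ W *ᵥ (w - y) + y ⬝ᵥ (S - W) *ᵥ y
        = w ⬝ᵥ W *ᵥ w - w ⬝ᵥ W *ᵥ y - y ⬝ᵥ W *ᵥ w + y ⬝ᵥ W *ᵥ y
          + (y ⬝ᵥ S *ᵥ y - y ⬝ᵥ W *ᵥ y) := by
      simp only [Matrix.sub_mulVec, Matrix.mulVec_sub, dotProduct_sub,
        sub_dotProduct]
      ring
    rw [expand, e1, e2, e3, e4, e5, e6, e7]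
    ring
  linarith

lemma trace_inv_antitone {m : Type*} [Fintype m] [DecidableEq m]
    {W S : Matrix m m ℝ} (hW : W.PosDef) (hS : S.PosDef) (hsub : (S - W).PosSemidef) :
    (S⁻¹).trace ≤ (W⁻¹).trace := by
  have h : ∀ i, (S⁻¹).diag i ≤ (W⁻¹).diag i := by
    intro i
    have := quad_inv_antitone hW hS hsub (Pi.single i 1)
    simpa [dotProduct, Matrix.mulVec, Pi.single_apply, Matrix.diag] using this
  exact Finset.sum_le_sum fun i _ => h i

end RiccatiAux

/-- Entropy lower bound for the a priori covariance:
`ln det S ≥ ln( (det A)² / ((1/n)(tr W⁻¹ + ∑ᵢ cᵢ²/σᵢ²)ⁿ) + det W )`. -/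
theorem riccati_logdet_lower {n : ℕ} (hn : 1 ≤ n)
    (A W S : Matrix (Fin n) (Fin n) ℝ)
    (c σ : Fin n → ℝ) (hc : ∀ i, 0 < c i) (hσ : ∀ i, 0 < σ i)
    (hW : W.PosDef) (hS : S.PosDef)
    (hric : S = A * S * Aᵀ -
        A * S * (Matrix.diagonal c)ᵀ *
          (Matrix.diagonal c * S * (Matrix.diagonal c)ᵀ +
            Matrix.diagonal fun i => σ i ^ 2)⁻¹ *
          Matrix.diagonal c * S * Aᵀ + W) :
    Real.log ((A.det) ^ 2 /
        ((1 / (n : ℝ)) * ((W⁻¹).trace + ∑ i, c i ^ 2 / σ i ^ 2) ^ n) + W.det) ≤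
      Real.log S.det := by
  haveI : Nonempty (Fin n) := ⟨⟨0, hn⟩⟩
  set Dc : Matrix (Fin n) (Fin n) ℝ := Matrix.diagonal c with hDc
  set Vm : Matrix (Fin n) (Fin n) ℝ := Matrix.diagonal (fun i => σ i ^ 2) with hVm
  set D : Matrix (Fin n) (Fin n) ℝ := Matrix.diagonal (fun i => c i ^ 2 / σ i ^ 2) with hD
  have hVm_pd : Vm.PosDef := Matrix.PosDef.diagonal (fun i => pow_pos (hσ i) 2)
  have hD_pd : D.PosDef := Matrix.PosDef.diagonal
    (fun i => div_pos (pow_pos (hc i) 2) (pow_pos (hσ i) 2))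
  have hSdet : IsUnit S.det := isUnit_iff_ne_zero.mpr hS.det_pos.ne'
  have hVdet : IsUnit Vm.det := isUnit_iff_ne_zero.mpr hVm_pd.det_pos.ne'
  have hSS : S⁻¹⁻¹ = S := Matrix.nonsing_inv_nonsing_inv _ hSdet
  have hVV : Vm⁻¹⁻¹ = Vm := Matrix.nonsing_inv_nonsing_inv _ hVdet
  have hVinv : Vm⁻¹ = Matrix.diagonal (fun i => (σ i ^ 2)⁻¹) := by
    apply Matrix.inv_eq_right_inv
    rw [hVm, Matrix.diagonal_mul_diagonal, ← Matrix.diagonal_one]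
    exact congrArg Matrix.diagonal (funext fun i => mul_inv_cancel₀ (pow_pos (hσ i) 2).ne')
  have hDcD : Dc * Vm⁻¹ * Dc = D := by
    rw [hDc, hVinv, hD, Matrix.diagonal_mul_diagonal, Matrix.diagonal_mul_diagonal]
    refine congrArg Matrix.diagonal (funext fun i => ?_)
    field_simp
  have hDcSDc : (Dc * S * Dc).PosSemidef := by
    have := hS.posSemidef.mul_mul_conjTranspose_same Dc
    rwa [conjTranspose_eq_transpose_of_trivial, Matrix.diagonal_transpose] at this
  have hG_pd : (Vm + Dc * S * Dc).PosDef := hVm_pd.add_posSemidef hDcSDc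
  have hSinv_pd : S⁻¹.PosDef := hS.inv
  have hSiD_pd : (S⁻¹ + D).PosDef := hSinv_pd.add hD_pd
  set M : Matrix (Fin n) (Fin n) ℝ := (S⁻¹ + D)⁻¹ with hMdef
  have hM_pd : M.PosDef := hSiD_pd.inv
  -- Woodbury
  have hwood := Matrix.add_mul_mul_inv_eq_sub (S⁻¹) Dc (Vm⁻¹) Dc
    ((Matrix.isUnit_iff_isUnit_det _).mpr
      (isUnit_iff_ne_zero.mpr hSinv_pd.det_pos.ne'))
    ((Matrix.isUnit_iff_isUnit_det _).mpr
      (isUnit_iff_ne_zero.mpr hVm_pd.inv.det_pos.ne'))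
    (by
      rw [hVV, hSS]
      exact (Matrix.isUnit_iff_isUnit_det _).mpr (isUnit_iff_ne_zero.mpr hG_pd.det_pos.ne'))
  rw [hVV, hSS, hDcD] at hwood
  have hS2 : S = A * M * Aᵀ + W := by
    rw [hMdef, hwood]
    conv_lhs => rw [hric]
    have hDcT : Dcᵀ = Dc := Matrix.diagonal_transpose c
    rw [hDcT, add_comm (Dc * S * Dc) Vm]
    noncomm_ring
  have hAMA : (A * M * Aᵀ).PosSemidef := by
    have := hM_pd.posSemidef.mul_mul_conjTranspose_same A
    rwa [conjTranspose_eq_transpose_of_trivial] at this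
  have hsub : (S - W).PosSemidef := by
    rw [hS2, add_sub_cancel_right]
    exact hAMA
  -- determinant superadditivity
  have hdet1 : (A * M * Aᵀ).det + W.det ≤ S.det := by
    conv_rhs => rw [hS2]
    exact det_superadd hAMA hW
  have hdetAMA : (A * M * Aᵀ).det = A.det ^ 2 * M.det := by
    rw [Matrix.det_mul, Matrix.det_mul, Matrix.det_transpose]
    ring
  -- trace bound
  set t : ℝ := (W⁻¹).trace + ∑ i, c i ^ 2 / σ i ^ 2 with ht
  have htr : (S⁻¹ + D).trace ≤ t := by
    rw [Matrix.trace_add, ht, hD, Matrix.trace_diagonal]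
    exact add_le_add (trace_inv_antitone hW hS hsub) le_rfl
  have htr0 : 0 ≤ (S⁻¹ + D).trace := trace_nonneg_of_psd hSiD_pd.posSemidef
  have ht0 : 0 ≤ t := le_trans htr0 htr
  have hnR : (0:ℝ) < n := by exact_mod_cast hn
  have hdet2 : (S⁻¹ + D).det ≤ (t / n) ^ n := by
    have h1 := det_le_trace_div_pow hSiD_pd.posSemidef
    simp only [Fintype.card_fin] at h1
    refine le_trans h1 (pow_le_pow_left₀ (div_nonneg htr0 hnR.le) ?_ n)
    gcongr
  have hdet3 : (t / n) ^ n ≤ (1 / n) * t ^ n := by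
    rw [div_pow, one_div, inv_mul_eq_div]
    apply div_le_div_of_nonneg_left (by positivity) hnR
    exact_mod_cast Nat.le_self_pow (by omega) n
  have hdpos : 0 < (S⁻¹ + D).det := hSiD_pd.det_pos
  have hden : 0 < (1 / (n:ℝ)) * t ^ n := lt_of_lt_of_le hdpos (hdet2.trans hdet3)
  have hMdet : M.det = ((S⁻¹ + D).det)⁻¹ := by
    rw [hMdef, Matrix.det_nonsing_inv, Ring.inverse_eq_inv']
  have hMdet_ge : ((1 / (n:ℝ)) * t ^ n)⁻¹ ≤ M.det := by
    rw [hMdet]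
    exact inv_anti₀ hdpos (hdet2.trans hdet3)
  have hfinal : A.det ^ 2 / ((1 / (n:ℝ)) * t ^ n) + W.det ≤ S.det := by
    refine le_trans ?_ hdet1
    rw [hdetAMA]
    apply add_le_add_left
    rw [div_eq_mul_inv]
    exact mul_le_mul_of_nonneg_left hMdet_ge (sq_nonneg _)
  have hpos : 0 < A.det ^ 2 / ((1 / (n:ℝ)) * t ^ n) + W.det := by
    have := hW.det_pos
    positivity
  exact Real.log_le_log hpos hfinal
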